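/- Let μ ∈ 𝒫(X). Let Q : X × U → ℝ be such that for each x ∈ X there exists q_x : A → ℝ with Q(x,u) = ⟨q_x,u⟩ − Ω(u) for all u ∈ U, and let Q̂ : X × U → ℝ be any function such that for each x the function Q̂(x,·) attains a maximum over U. Denote by f_Q(x) and f_{Q̂}(x) maximizers of Q(x,·) and Q̂(x,·) over U respectively. Then ‖H2(μ,Q) − H2(μ,Q̂)‖₁ ≤ √θ · K1 · √(‖Q − Q̂‖_∞), where θ := 4/ρ and H2(μ,Q)(·) := ∑_{x∈X} P(·|x,f_Q(x),μ) μ(x). (Estimate (mainbound) in the proof of Theorem 3.) -/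

import Mathlib

namespace MFG

open Finset

def IsProb {E : Type*} [Fintype E] (μ : E → ℝ) : Prop :=
  (∀ e, 0 ≤ μ e) ∧ ∑ e, μ e = 1

def l1 {E : Type*} [Fintype E] (μ ν : E → ℝ) : ℝ :=
  ∑ e, |μ e - ν e|

def ind {E : Type*} [DecidableEq E] (x y : E) : ℝ :=
  if x = y then 0 else 1

def RewardLip {X A : Type*} [Fintype X] [Fintype A] [DecidableEq X] [DecidableEq A]
    (r : X → A → (X → ℝ) → ℝ) (L1 : ℝ) : Prop :=
  ∀ x x' a a' μ μ', IsProb μ → IsProb μ' →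
    |r x a μ - r x' a' μ'| ≤ L1 * (ind x x' + 2 * ind a a' + l1 μ μ')

def KernelLip {X A : Type*} [Fintype X] [Fintype A] [DecidableEq X] [DecidableEq A]
    (p : X → A → (X → ℝ) → X → ℝ) (K1 : ℝ) : Prop :=
  ∀ x x' a a' μ μ', IsProb μ → IsProb μ' →
    l1 (p x a μ) (p x' a' μ') ≤ K1 * (ind x x' + 2 * ind a a' + l1 μ μ')

def IsKernel {X A : Type*} [Fintype X] [Fintype A]
    (p : X → A → (X → ℝ) → X → ℝ) : Prop :=
  ∀ x a μ, IsProb μ → IsProb (p x a μ)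

def RewardNonneg {X A : Type*} [Fintype X] [Fintype A]
    (r : X → A → (X → ℝ) → ℝ) : Prop :=
  ∀ x a μ, IsProb μ → 0 ≤ r x a μ

def OmegaLip {A : Type*} [Fintype A] (Ω : (A → ℝ) → ℝ) (Lreg : ℝ) : Prop :=
  ∀ u v, IsProb u → IsProb v → |Ω u - Ω v| ≤ Lreg * l1 u v

def StrongConvex {A : Type*} [Fintype A] (Ω : (A → ℝ) → ℝ)
    (DΩ : (A → ℝ) → (A → ℝ)) (ρ : ℝ) : Prop :=
  ∀ u v, IsProb u → IsProb v →
    Ω u + (∑ a, DΩ u a * (v a - u a)) + ρ / 2 * (l1 u v) ^ 2 ≤ Ω v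

noncomputable def Tbell {X A : Type*} [Fintype X] [Fintype A]
    (r : X → A → (X → ℝ) → ℝ) (p : X → A → (X → ℝ) → X → ℝ)
    (Ω : (A → ℝ) → ℝ) (β : ℝ) (μ : X → ℝ) (v : X → ℝ) (x : X) : ℝ :=
  ⨆ u : {w : A → ℝ // IsProb w},
    ((∑ a, r x a μ * u.1 a) - Ω u.1 + β * ∑ y, v y * (∑ a, p x a μ y * u.1 a))

noncomputable def Qmax {X A : Type*} [Fintype A] (Q : X → (A → ℝ) → ℝ) (y : X) : ℝ :=
  ⨆ u : {w : A → ℝ // IsProb w}, Q y u.1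

noncomputable def Lbell {X A : Type*} [Fintype X] [Fintype A]
    (r : X → A → (X → ℝ) → ℝ) (p : X → A → (X → ℝ) → X → ℝ)
    (Ω : (A → ℝ) → ℝ) (β : ℝ) (μ : X → ℝ) (Q : X → (A → ℝ) → ℝ)
    (x : X) (u : A → ℝ) : ℝ :=
  (∑ a, r x a μ * u a) - Ω u + β * ∑ y, Qmax Q y * (∑ a, p x a μ y * u a)

def BddFixedPoint {X A : Type*} [Fintype X] [Fintype A]
    (r : X → A → (X → ℝ) → ℝ) (p : X → A → (X → ℝ) → X → ℝ)
    (Ω : (A → ℝ) → ℝ) (β : ℝ) (μ : X → ℝ) (Q : X → (A → ℝ) → ℝ) : Prop :=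
  (∃ C, ∀ x u, IsProb u → |Q x u| ≤ C) ∧
  (∀ x u, IsProb u → Q x u = Lbell r p Ω β μ Q x u)

lemma l1_nonneg {E : Type*} [Fintype E] (u v : E → ℝ) : 0 ≤ l1 u v :=
  Finset.sum_nonneg fun _ _ => abs_nonneg _

lemma gap_lemma {A : Type*} [Fintype A] (Ω : (A → ℝ) → ℝ) (DΩ : (A → ℝ) → (A → ℝ))
    (ρ : ℝ) (hρ : 0 < ρ) (hΩ : StrongConvex Ω DΩ ρ) (q : A → ℝ) (f v : A → ℝ)
    (hf : IsProb f) (hv : IsProb v)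
    (hmax : ∀ u, IsProb u → (∑ a, q a * u a) - Ω u ≤ (∑ a, q a * f a) - Ω f) :
    ρ / 2 * (l1 f v) ^ 2 ≤ ((∑ a, q a * f a) - Ω f) - ((∑ a, q a * v a) - Ω v) := by
  set d : ℝ := l1 f v with hd
  have hd0 : 0 ≤ d := l1_nonneg f v
  set Qf : ℝ := ∑ a, q a * f a with hQf
  set Qv : ℝ := ∑ a, q a * v a with hQv
  set b : ℝ := (Qf - Ω f) - (Qv - Ω v) with hb
  have hb0 : 0 ≤ b := by
    have := hmax v hv; simp only [hb]; linarith
  have key : ∀ t : ℝ, 0 < t → t < 1 → (1 - t) * (ρ / 2 * d ^ 2) ≤ b := by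
    intro t ht0 ht1
    have ht1' : (0:ℝ) < 1 - t := by linarith
    set u : A → ℝ := fun a => (1 - t) * f a + t * v a with hu
    have hup : IsProb u := by
      constructor
      · intro a
        have h1 := hf.1 a; have h2 := hv.1 a
        have : (0:ℝ) ≤ 1 - t := by linarith
        simp only [hu]; positivity
      · simp only [hu, Finset.sum_add_distrib, ← Finset.mul_sum, hf.2, hv.2]; ring
    have huf : l1 u f = t * d := by
      simp only [l1, hd, hu]
      rw [Finset.mul_sum]
      refine Finset.sum_congr rfl fun a _ => ?_
      have h : (1 - t) * f a + t * v a - f a = t * (v a - f a) := by ring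
      rw [h, abs_mul, abs_of_pos ht0, abs_sub_comm]
    have huv : l1 u v = (1 - t) * d := by
      simp only [l1, hd, hu]
      rw [Finset.mul_sum]
      refine Finset.sum_congr rfl fun a _ => ?_
      have h : (1 - t) * f a + t * v a - v a = (1 - t) * (f a - v a) := by ring
      rw [h, abs_mul, abs_of_pos ht1']
    set S1 : ℝ := ∑ a, DΩ u a * (f a - u a) with hS1
    set S2 : ℝ := ∑ a, DΩ u a * (v a - u a) with hS2
    have h1 := hΩ u f hup hf
    have h2 := hΩ u v hup hv
    rw [huf] at h1
    rw [huv] at h2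
    have e1 : (1 - t) * S1 + t * S2 = 0 := by
      simp only [hS1, hS2, Finset.mul_sum, ← Finset.sum_add_distrib]
      refine Finset.sum_eq_zero fun a _ => ?_
      simp only [hu]; ring
    have hqu : (∑ a, q a * u a) = (1 - t) * Qf + t * Qv := by
      simp only [hu, hQf, hQv, Finset.mul_sum, ← Finset.sum_add_distrib]
      exact Finset.sum_congr rfl fun a _ => by ring
    have hm := hmax u hup
    rw [hqu] at hm
    have h1' : (1 - t) * (Ω u + S1 + ρ / 2 * (t * d) ^ 2) ≤ (1 - t) * Ω f :=
      mul_le_mul_of_nonneg_left h1 ht1'.le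
    have h2' : t * (Ω u + S2 + ρ / 2 * ((1 - t) * d) ^ 2) ≤ t * Ω v :=
      mul_le_mul_of_nonneg_left h2 ht0.le
    have hstep : t * ((1 - t) * (ρ / 2 * d ^ 2)) ≤ t * b := by
      simp only [hb]; nlinarith [h1', h2', hm, e1]
    exact le_of_mul_le_mul_left hstep ht0
  by_contra hcon
  push_neg at hcon
  set a : ℝ := ρ / 2 * d ^ 2 with ha
  have ha0 : 0 < a := lt_of_le_of_lt hb0 hcon
  have ht := key ((a - b) / (2 * a)) (div_pos (by linarith) (by linarith))
    (by rw [div_lt_one (by linarith)]; linarith)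
  have heq : (1 - (a - b) / (2 * a)) * a = a - (a - b) / 2 := by field_simp
  rw [heq] at ht
  linarith

lemma mix_lemma {X A : Type*} [Fintype X] [Fintype A] (P : A → X → ℝ) (K1 : ℝ)
    (hK1 : 0 ≤ K1) (hPd : ∀ a b, l1 (P a) (P b) ≤ 2 * K1)
    (u v : A → ℝ) (hu : IsProb u) (hv : IsProb v) :
    ∑ y, |∑ a, P a y * (u a - v a)| ≤ K1 * l1 u v := by
  set wp : A → ℝ := fun a => max (u a - v a) 0 with hwp
  set wm : A → ℝ := fun a => max (v a - u a) 0 with hwm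
  have hwp0 : ∀ a, 0 ≤ wp a := fun a => le_max_right _ _
  have hwm0 : ∀ a, 0 ≤ wm a := fun a => le_max_right _ _
  have hdiff : ∀ a, u a - v a = wp a - wm a := fun a => by
    simp only [hwp, hwm]; rcases le_total (u a) (v a) with h | h
    · rw [max_eq_right (by linarith : u a - v a ≤ 0),
        max_eq_left (by linarith : (0:ℝ) ≤ v a - u a)]; ring
    · rw [max_eq_left (by linarith : (0:ℝ) ≤ u a - v a),
        max_eq_right (by linarith : v a - u a ≤ 0)]; ring
  have habs : ∀ a, |u a - v a| = wp a + wm a := fun a => by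
    simp only [hwp, hwm]; rcases le_total (u a) (v a) with h | h
    · rw [abs_of_nonpos (by linarith), max_eq_right (by linarith : u a - v a ≤ 0),
        max_eq_left (by linarith : (0:ℝ) ≤ v a - u a)]; ring
    · rw [abs_of_nonneg (by linarith), max_eq_left (by linarith : (0:ℝ) ≤ u a - v a),
        max_eq_right (by linarith : v a - u a ≤ 0)]; ring
  set s : ℝ := ∑ a, wp a with hs
  have hs0 : 0 ≤ s := Finset.sum_nonneg fun a _ => hwp0 a
  have hsum0 : ∑ a, (u a - v a) = 0 := by
    rw [Finset.sum_sub_distrib, hu.2, hv.2]; ring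
  have hsm : ∑ a, wm a = s := by
    have h0 : ∑ a, (wp a - wm a) = 0 := by
      rw [← hsum0]; exact Finset.sum_congr rfl fun a _ => (hdiff a).symm
    rw [Finset.sum_sub_distrib] at h0; linarith
  have hl1 : l1 u v = 2 * s := by
    simp only [l1]
    rw [show (2:ℝ) * s = s + s by ring]
    nth_rewrite 2 [← hsm]
    rw [hs, ← Finset.sum_add_distrib]
    exact Finset.sum_congr rfl fun a _ => habs a
  rcases eq_or_lt_of_le hs0 with hseq | hspos
  · have hwpz : ∀ a, wp a = 0 := fun a =>
      (Finset.sum_eq_zero_iff_of_nonneg (fun a _ => hwp0 a)).mp hseq.symm a (Finset.mem_univ a)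
    have hwmz : ∀ a, wm a = 0 := fun a => by
      have h0 : ∑ a, wm a = 0 := by rw [hsm, ← hseq]
      exact (Finset.sum_eq_zero_iff_of_nonneg (fun a _ => hwm0 a)).mp h0 a (Finset.mem_univ a)
    have huv : ∀ a, u a - v a = 0 := fun a => by rw [hdiff a, hwpz a, hwmz a]; ring
    have hL : ∑ y, |∑ a, P a y * (u a - v a)| = 0 :=
      Finset.sum_eq_zero fun y _ => by
        rw [abs_eq_zero]
        exact Finset.sum_eq_zero fun a _ => by rw [huv a]; ring
    rw [hL]
    have : 0 ≤ l1 u v := Finset.sum_nonneg fun _ _ => abs_nonneg _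
    positivity
  · have hkey : ∀ y, s * (∑ a, P a y * (u a - v a)) =
        ∑ a, ∑ b, wp a * wm b * (P a y - P b y) := by
      intro y
      have e2 : ∑ a, ∑ b, wp a * wm b * P a y = (∑ a, wp a * P a y) * s := by
        rw [Finset.sum_mul]
        refine Finset.sum_congr rfl fun a _ => ?_
        rw [show wp a * P a y * s = ∑ b, wm b * (wp a * P a y) by
          rw [← Finset.sum_mul, hsm]; ring]
        exact Finset.sum_congr rfl fun b _ => by ring
      have e3 : ∑ a, ∑ b, wp a * wm b * P b y = s * (∑ b, wm b * P b y) := by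
        rw [Finset.sum_comm]
        rw [Finset.mul_sum]
        refine Finset.sum_congr rfl fun b _ => ?_
        rw [show s * (wm b * P b y) = ∑ a, wp a * (wm b * P b y) by
          rw [← Finset.sum_mul, ← hs]]
        exact Finset.sum_congr rfl fun a _ => by ring
      have e4 : ∑ a, ∑ b, wp a * wm b * (P a y - P b y) =
          (∑ a, ∑ b, wp a * wm b * P a y) - ∑ a, ∑ b, wp a * wm b * P b y := by
        rw [← Finset.sum_sub_distrib]
        refine Finset.sum_congr rfl fun a _ => ?_
        rw [← Finset.sum_sub_distrib]
        exact Finset.sum_congr rfl fun b _ => by ring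
      have e5 : s * (∑ a, P a y * (u a - v a)) =
          (∑ a, wp a * P a y) * s - s * (∑ a, wm a * P a y) := by
        rw [show (∑ a, P a y * (u a - v a)) = ∑ a, (wp a * P a y - wm a * P a y) from
          Finset.sum_congr rfl fun a _ => by rw [hdiff a]; ring]
        rw [Finset.sum_sub_distrib]; ring
      rw [e5, e4, e2, e3]
    have hbound : s * ∑ y, |∑ a, P a y * (u a - v a)| ≤ 2 * K1 * s ^ 2 := by
      calc s * ∑ y, |∑ a, P a y * (u a - v a)|
          = ∑ y, |s * ∑ a, P a y * (u a - v a)| := by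
            rw [Finset.mul_sum]
            exact Finset.sum_congr rfl fun y _ => by rw [abs_mul, abs_of_nonneg hs0]
        _ = ∑ y, |∑ a, ∑ b, wp a * wm b * (P a y - P b y)| :=
            Finset.sum_congr rfl fun y _ => by rw [hkey y]
        _ ≤ ∑ y, ∑ a, ∑ b, |wp a * wm b * (P a y - P b y)| := by
            refine Finset.sum_le_sum fun y _ => ?_
            calc |∑ a, ∑ b, wp a * wm b * (P a y - P b y)|
                ≤ ∑ a, |∑ b, wp a * wm b * (P a y - P b y)| :=
                  Finset.abs_sum_le_sum_abs _ _
              _ ≤ ∑ a, ∑ b, |wp a * wm b * (P a y - P b y)| :=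
                  Finset.sum_le_sum fun a _ => Finset.abs_sum_le_sum_abs _ _
        _ = ∑ a, ∑ b, wp a * wm b * l1 (P a) (P b) := by
            rw [Finset.sum_comm]
            refine Finset.sum_congr rfl fun a _ => ?_
            rw [Finset.sum_comm]
            refine Finset.sum_congr rfl fun b _ => ?_
            simp only [l1, Finset.mul_sum]
            refine Finset.sum_congr rfl fun y _ => ?_
            rw [abs_mul, abs_mul, abs_of_nonneg (hwp0 a), abs_of_nonneg (hwm0 b)]
        _ ≤ ∑ a, ∑ b, wp a * wm b * (2 * K1) := by
            refine Finset.sum_le_sum fun a _ => Finset.sum_le_sum fun b _ => ?_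
            exact mul_le_mul_of_nonneg_left (hPd a b) (mul_nonneg (hwp0 a) (hwm0 b))
        _ = ∑ a, wp a * (s * (2 * K1)) :=
            Finset.sum_congr rfl fun a _ => by
              rw [show wp a * (s * (2 * K1)) = ∑ b, wm b * (wp a * (2 * K1)) by
                rw [← Finset.sum_mul, hsm]; ring]
              exact Finset.sum_congr rfl fun b _ => by ring
        _ = 2 * K1 * s ^ 2 := by rw [← Finset.sum_mul, ← hs]; ring
    have hfin := le_of_mul_le_mul_left (by
      calc s * ∑ y, |∑ a, P a y * (u a - v a)| ≤ 2 * K1 * s ^ 2 := hbound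
        _ = s * (2 * K1 * s) := by ring) hspos
    rw [hl1]
    linarith


/-- estimate (mainbound) in the proof of Theorem 3:
`‖H2(μ,Q) - H2(μ,Q̂)‖₁ ≤ √θ K1 √(‖Q - Q̂‖_∞)` with `θ = 4/ρ`. -/
theorem statement16 {X A : Type*} [Fintype X] [Fintype A] [Nonempty X] [Nonempty A]
    [DecidableEq X] [DecidableEq A]
    (p : X → A → (X → ℝ) → X → ℝ) (K1 : ℝ) (hK1 : 0 ≤ K1)
    (hp_prob : IsKernel p) (hp : KernelLip p K1)
    (Ω : (A → ℝ) → ℝ) (DΩ : (A → ℝ) → (A → ℝ)) (ρ : ℝ) (hρ : 0 < ρ)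
    (hΩ : StrongConvex Ω DΩ ρ)
    (μ : X → ℝ) (hμ : IsProb μ)
    (Q Qhat : X → (A → ℝ) → ℝ) (qx : X → A → ℝ)
    (hQform : ∀ x u, IsProb u → Q x u = (∑ a, qx x a * u a) - Ω u)
    (fQ fQhat : X → A → ℝ)
    (hfQ : ∀ x, IsProb (fQ x)) (hfQhat : ∀ x, IsProb (fQhat x))
    (hfQmax : ∀ x u, IsProb u → Q x u ≤ Q x (fQ x))
    (hfQhatmax : ∀ x u, IsProb u → Qhat x u ≤ Qhat x (fQhat x)) :
    ∀ C : ℝ, (∀ x u, IsProb u → |Q x u - Qhat x u| ≤ C) →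
      l1 (fun y => ∑ x, (∑ a, p x a μ y * fQ x a) * μ x)
         (fun y => ∑ x, (∑ a, p x a μ y * fQhat x a) * μ x) ≤
        Real.sqrt (4 / ρ) * K1 * Real.sqrt C := by
  intro C hC
  have x0 : X := Classical.arbitrary X
  have hC0 : 0 ≤ C := le_trans (abs_nonneg _) (hC x0 (fQ x0) (hfQ x0))
  have hdist : ∀ x, l1 (fQ x) (fQhat x) ≤ Real.sqrt (4 / ρ) * Real.sqrt C := by
    intro x
    have hgap := gap_lemma Ω DΩ ρ hρ hΩ (qx x) (fQ x) (fQhat x) (hfQ x) (hfQhat x)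
      (fun u hu => by
        rw [← hQform x u hu, ← hQform x (fQ x) (hfQ x)]; exact hfQmax x u hu)
    have h2C : ((∑ a, qx x a * fQ x a) - Ω (fQ x)) -
        ((∑ a, qx x a * fQhat x a) - Ω (fQhat x)) ≤ 2 * C := by
      rw [← hQform x (fQ x) (hfQ x), ← hQform x (fQhat x) (hfQhat x)]
      have h1 := abs_le.mp (hC x (fQ x) (hfQ x))
      have h2 := abs_le.mp (hC x (fQhat x) (hfQhat x))
      have h3 := hfQhatmax x (fQ x) (hfQ x)
      linarith [h1.1, h1.2, h2.1, h2.2]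
    have hd2 : (l1 (fQ x) (fQhat x)) ^ 2 ≤ 4 / ρ * C := by
      have hg := le_trans hgap h2C
      rw [div_mul_eq_mul_div, le_div_iff₀ hρ]
      nlinarith
    have hd0 := l1_nonneg (fQ x) (fQhat x)
    calc l1 (fQ x) (fQhat x) = Real.sqrt ((l1 (fQ x) (fQhat x)) ^ 2) :=
          (Real.sqrt_sq hd0).symm
      _ ≤ Real.sqrt (4 / ρ * C) := Real.sqrt_le_sqrt hd2
      _ = Real.sqrt (4 / ρ) * Real.sqrt C := Real.sqrt_mul (by positivity) C
  have hker : ∀ x, ∑ y, |∑ a, p x a μ y * (fQ x a - fQhat x a)| ≤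
      K1 * l1 (fQ x) (fQhat x) := by
    intro x
    refine mix_lemma (fun a => p x a μ) K1 hK1 (fun a b => ?_) (fQ x) (fQhat x)
      (hfQ x) (hfQhat x)
    have hlip := hp x x a b μ μ hμ hμ
    have hxx : ind x x = 0 := if_pos rfl
    have hμμ : l1 μ μ = 0 := by simp [l1]
    rw [hxx, hμμ] at hlip
    have hind : ind a b ≤ 1 := by unfold ind; split <;> norm_num
    nlinarith
  calc l1 (fun y => ∑ x, (∑ a, p x a μ y * fQ x a) * μ x)
        (fun y => ∑ x, (∑ a, p x a μ y * fQhat x a) * μ x)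
      = ∑ y, |∑ x, μ x * (∑ a, p x a μ y * (fQ x a - fQhat x a))| := by
        simp only [l1]
        refine Finset.sum_congr rfl fun y _ => ?_
        congr 1
        rw [← Finset.sum_sub_distrib]
        refine Finset.sum_congr rfl fun x _ => ?_
        rw [Finset.sum_mul, Finset.sum_mul, Finset.mul_sum, ← Finset.sum_sub_distrib]
        exact Finset.sum_congr rfl fun a _ => by ring
    _ ≤ ∑ y, ∑ x, |μ x * (∑ a, p x a μ y * (fQ x a - fQhat x a))| :=
        Finset.sum_le_sum fun y _ => Finset.abs_sum_le_sum_abs _ _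
    _ = ∑ x, μ x * ∑ y, |∑ a, p x a μ y * (fQ x a - fQhat x a)| := by
        rw [Finset.sum_comm]
        refine Finset.sum_congr rfl fun x _ => ?_
        rw [Finset.mul_sum]
        exact Finset.sum_congr rfl fun y _ => by rw [abs_mul, abs_of_nonneg (hμ.1 x)]
    _ ≤ ∑ x, μ x * (K1 * (Real.sqrt (4 / ρ) * Real.sqrt C)) := by
        refine Finset.sum_le_sum fun x _ => ?_
        refine mul_le_mul_of_nonneg_left ?_ (hμ.1 x)
        calc ∑ y, |∑ a, p x a μ y * (fQ x a - fQhat x a)|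
            ≤ K1 * l1 (fQ x) (fQhat x) := hker x
          _ ≤ K1 * (Real.sqrt (4 / ρ) * Real.sqrt C) :=
              mul_le_mul_of_nonneg_left (hdist x) hK1
    _ = Real.sqrt (4 / ρ) * K1 * Real.sqrt C := by
        rw [← Finset.sum_mul, hμ.2]; ring


end MFG
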